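/- Let A be a compact self-adjoint bounded linear operator on a complex Hilbert space H with ‖A‖ ≤ 1, and suppose A = P − Q where P and Q are orthogonal projections on H. If λ ∈ σ(A) and λ ∉ {0, 1, −1}, then −λ ∈ σ(A) and dim ker(A − λI) = dim ker(A + λI) (both eigenspaces being finite-dimensional). -/

import Mathlib

open ContinuousLinearMap

section Defs

variable {H : Type*} [NormedAddCommGroup H] [InnerProductSpace ℂ H] [CompleteSpace H]

/-- The defect operator `C(V₁, V₂) = I - V₁V₁* - V₂V₂* + V₁V₂V₁*V₂*` of a pair of
operators on a complex Hilbert space. -/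
noncomputable def defectOp (V₁ V₂ : H →L[ℂ] H) : H →L[ℂ] H :=
  1 - V₁ ∘L adjoint V₁ - V₂ ∘L adjoint V₂ + V₁ ∘L V₂ ∘L adjoint V₁ ∘L adjoint V₂

/-- The cross-commutator `[V₂*, V₁] = V₂*V₁ - V₁V₂*`. -/
noncomputable def crossComm (V₁ V₂ : H →L[ℂ] H) : H →L[ℂ] H :=
  adjoint V₂ ∘L V₁ - V₁ ∘L adjoint V₂

/-- An isometric pair: both operators are isometries and they commute. -/
def IsIsometricPair (V₁ V₂ : H →L[ℂ] H) : Prop :=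
  (∀ x : H, ‖V₁ x‖ = ‖x‖) ∧ (∀ x : H, ‖V₂ x‖ = ‖x‖) ∧ V₁ ∘L V₂ = V₂ ∘L V₁

/-- A shift: an isometry `V` such that `(V*)^n x → 0` for every `x`. -/
def IsShift (V : H →L[ℂ] H) : Prop :=
  (∀ x : H, ‖V x‖ = ‖x‖) ∧
    ∀ x : H, Filter.Tendsto (fun n : ℕ => (adjoint V ^ n) x) Filter.atTop (nhds 0)

/-- A BCL pair: an isometric pair whose product is a shift. -/
def IsBCLPair (V₁ V₂ : H →L[ℂ] H) : Prop :=
  IsIsometricPair V₁ V₂ ∧ IsShift (V₁ ∘L V₂)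

/-- A compact normal pair: a BCL pair whose cross-commutator is compact and normal. -/
def IsCompactNormalPair (V₁ V₂ : H →L[ℂ] H) : Prop :=
  IsBCLPair V₁ V₂ ∧ IsCompactOperator ⇑(crossComm V₁ V₂) ∧
    crossComm V₁ V₂ ∘L adjoint (crossComm V₁ V₂) =
      adjoint (crossComm V₁ V₂) ∘L crossComm V₁ V₂

/-- A subspace reduces the pair `(V₁, V₂)` if it is invariant under `V₁, V₂, V₁*, V₂*`. -/
def ReducesPair (V₁ V₂ : H →L[ℂ] H) (S : Submodule ℂ H) : Prop :=
  (∀ x ∈ S, V₁ x ∈ S) ∧ (∀ x ∈ S, V₂ x ∈ S) ∧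
    (∀ x ∈ S, adjoint V₁ x ∈ S) ∧ (∀ x ∈ S, adjoint V₂ x ∈ S)

/-- A pair is irreducible if its only closed reducing subspaces are `⊥` and `⊤`. -/
def IsIrreduciblePair (V₁ V₂ : H →L[ℂ] H) : Prop :=
  ∀ S : Submodule ℂ H, IsClosed (S : Set H) → ReducesPair V₁ V₂ S → S = ⊥ ∨ S = ⊤

/-- An `n`-finite pair: a compact normal pair whose defect operator has `n`-dimensional
range. -/
def IsNFinitePair (n : ℕ) (V₁ V₂ : H →L[ℂ] H) : Prop :=
  IsCompactNormalPair V₁ V₂ ∧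
    Module.rank ℂ (LinearMap.range (defectOp V₁ V₂ : H →ₗ[ℂ] H)) = n

end Defs

section Aux

open scoped InnerProductSpace

variable {H : Type*} [NormedAddCommGroup H] [InnerProductSpace ℂ H] [CompleteSpace H]

lemma aux_mem_spectrum_of_ker (A : H →L[ℂ] H) (mu : ℂ)
    (h : LinearMap.ker ((A - mu • (1 : H →L[ℂ] H) : H →L[ℂ] H) : H →ₗ[ℂ] H) ≠ ⊥) : mu ∈ spectrum ℂ A := by
  rw [spectrum.mem_iff]
  intro hu
  have hbij : Function.Bijective ⇑(algebraMap ℂ (H →L[ℂ] H) mu - A) :=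
    ContinuousLinearMap.isUnit_iff_bijective.mp hu
  apply h
  rw [Submodule.eq_bot_iff]
  intro x hx
  have hx0 : (A - mu • (1 : H →L[ℂ] H)) x = 0 := hx
  have hAx : A x = mu • x := by
    simpa [sub_eq_zero, ContinuousLinearMap.sub_apply, ContinuousLinearMap.smul_apply,
      ContinuousLinearMap.one_apply] using hx0
  have h2 : (algebraMap ℂ (H →L[ℂ] H) mu - A) x = 0 := by
    simp [Algebra.algebraMap_eq_smul_one, ContinuousLinearMap.sub_apply,
      ContinuousLinearMap.smul_apply, ContinuousLinearMap.one_apply, hAx]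
  have := hbij.1 (a₂ := 0) (by simpa using h2)
  exact this

lemma aux_ker_ne_bot (A : H →L[ℂ] H) (hAc : IsCompactOperator ⇑A)
    (hAsa : IsSelfAdjoint A) (lam : ℂ) (hlam : lam ∈ spectrum ℂ A) (h0 : lam ≠ 0) :
    LinearMap.ker ((A - lam • (1 : H →L[ℂ] H) : H →L[ℂ] H) : H →ₗ[ℂ] H) ≠ ⊥ := by
  intro hker
  set T : H →L[ℂ] H := A - lam • 1 with hT
  have hre : lam = (lam.re : ℂ) := hAsa.mem_spectrum_eq_re hlam
  have hconj : star lam = lam := by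
    rw [hre]; exact Complex.conj_ofReal _
  have hTsa : IsSelfAdjoint T := by
    rw [IsSelfAdjoint, hT, star_sub, hAsa.star_eq, star_smul, star_one, hconj]
  have hinj : Function.Injective T := LinearMap.ker_eq_bot.mp hker
  -- T is bounded below
  have hbdd : ∃ c : ℝ, 0 < c ∧ ∀ x : H, c * ‖x‖ ≤ ‖T x‖ := by
    by_contra hc
    push_neg at hc
    have hu : ∀ n : ℕ, ∃ u : H, ‖u‖ = 1 ∧ ‖T u‖ < 1 / (n + 1) := by
      intro n
      obtain ⟨x, hx⟩ := hc (1 / (n + 1 : ℝ)) (by positivity)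
      have hx0 : x ≠ 0 := by
        rintro rfl; simp at hx
      have hxn : (0 : ℝ) < ‖x‖ := norm_pos_iff.mpr hx0
      refine ⟨((‖x‖ : ℂ))⁻¹ • x, ?_, ?_⟩
      · rw [norm_smul]
        simp [hxn.ne']
      · rw [map_smul, norm_smul]
        have : ‖((‖x‖ : ℂ))⁻¹‖ = ‖x‖⁻¹ := by
          simp [hxn.le]
        rw [this]
        rw [inv_mul_lt_iff₀ hxn]
        calc ‖T x‖ < 1 / (n + 1) * ‖x‖ := hx
          _ = ‖x‖ * (1 / (n + 1)) := by ring
    choose u hu1 hu2 using hu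
    have hK : IsCompact (closure (⇑A '' Metric.closedBall 0 1)) := by
      exact IsCompactOperator.isCompact_closure_image_closedBall (𝕜₁ := ℂ)
        (f := (A : H →ₗ[ℂ] H)) hAc 1
    have hmem : ∀ n, A (u n) ∈ closure (⇑A '' Metric.closedBall 0 1) := by
      intro n
      exact subset_closure ⟨u n, by simp [hu1 n], rfl⟩
    obtain ⟨y, -, φ, hφ, hy⟩ := hK.tendsto_subseq hmem
    have hT0 : Filter.Tendsto (fun n => T (u (φ n))) Filter.atTop (nhds 0) := by
      refine squeeze_zero_norm (a := fun n : ℕ => 1 / (n + 1 : ℝ)) ?_ tendsto_one_div_add_atTop_nhds_zero_nat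
      · intro n
        have h1 : ‖T (u (φ n))‖ < 1 / (φ n + 1 : ℝ) := hu2 (φ n)
        have h2 : (1 : ℝ) / (φ n + 1) ≤ 1 / (n + 1) := by
          apply one_div_le_one_div_of_le (by positivity)
          have h4 : n ≤ φ n := hφ.le_apply
          have h5 : (n : ℝ) ≤ (φ n : ℝ) := by exact_mod_cast h4
          linarith
        linarith
    have hux : ∀ x : H, x = lam⁻¹ • (A x - T x) := by
      intro x
      rw [hT]
      simp [ContinuousLinearMap.sub_apply, ContinuousLinearMap.smul_apply,
        ContinuousLinearMap.one_apply, smul_smul, inv_mul_cancel₀ h0]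
    have hv : Filter.Tendsto (fun n => u (φ n)) Filter.atTop (nhds (lam⁻¹ • (y - 0))) := by
      have := (hy.sub hT0).const_smul lam⁻¹
      refine this.congr fun n => ?_
      exact (hux (u (φ n))).symm
    set v : H := lam⁻¹ • (y - 0) with hvdef
    have hTv : T v = 0 := by
      have h1 : Filter.Tendsto (fun n => T (u (φ n))) Filter.atTop (nhds (T v)) :=
        (T.continuous.tendsto v).comp hv
      exact tendsto_nhds_unique h1 hT0
    have hvnorm : ‖v‖ = 1 := by
      have h1 : Filter.Tendsto (fun n => ‖u (φ n)‖) Filter.atTop (nhds ‖v‖) :=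
        (continuous_norm.tendsto v).comp hv
      have h2 : Filter.Tendsto (fun n : ℕ => (1 : ℝ)) Filter.atTop (nhds 1) :=
        tendsto_const_nhds
      have := h1.congr fun n => hu1 (φ n)
      exact (tendsto_nhds_unique this h2)
    have : v = 0 := hinj (by simpa using hTv)
    rw [this] at hvnorm
    simp at hvnorm
  obtain ⟨c, hc, hbound⟩ := hbdd
  have hanti : AntilipschitzWith ⟨c⁻¹, (inv_pos.mpr hc).le⟩ T := by
    apply T.antilipschitz_of_bound
    intro x
    have h1 : ‖x‖ = c⁻¹ * (c * ‖x‖) := by field_simp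
    rw [h1]
    exact mul_le_mul_of_nonneg_left (hbound x) (inv_pos.mpr hc).le
  have hclosed : IsClosed ((LinearMap.range (T : H →ₗ[ℂ] H) : Submodule ℂ H) : Set H) :=
    hanti.isClosed_range T.uniformContinuous
  haveI : CompleteSpace (LinearMap.range (T : H →ₗ[ℂ] H) : Submodule ℂ H) := hclosed.completeSpace_coe
  have horth : (LinearMap.range (T : H →ₗ[ℂ] H) : Submodule ℂ H)ᗮ = ⊥ := by
    rw [Submodule.eq_bot_iff]
    intro x hx
    have hx' : ∀ y : H, ⟪T y, x⟫_ℂ = 0 := fun y =>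
      (Submodule.mem_orthogonal _ x).mp hx _ ⟨y, rfl⟩
    have hadj : ContinuousLinearMap.adjoint T = T := hTsa.adjoint_eq
    have hTx : ⟪T x, T x⟫_ℂ = 0 := by
      have := hx' (T x)
      rwa [← hadj, ContinuousLinearMap.adjoint_inner_left, hadj] at this
    have : T x = 0 := inner_self_eq_zero.mp hTx
    exact hinj (by simpa using this)
  have hsurj : LinearMap.range (T : H →ₗ[ℂ] H) = ⊤ := Submodule.orthogonal_eq_bot_iff.mp horth
  have hUnit : IsUnit T := ContinuousLinearMap.isUnit_iff_bijective.mpr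
    ⟨hinj, LinearMap.range_eq_top.mp hsurj⟩
  have : IsUnit (algebraMap ℂ (H →L[ℂ] H) lam - A) := by
    have heq : algebraMap ℂ (H →L[ℂ] H) lam - A = -T := by
      rw [hT, Algebra.algebraMap_eq_smul_one, neg_sub]
    rw [heq]
    exact hUnit.neg
  exact spectrum.mem_iff.mp hlam this

lemma aux_finiteDim_ker (A : H →L[ℂ] H) (hAc : IsCompactOperator ⇑A) (mu : ℂ) (hmu : mu ≠ 0) :
    FiniteDimensional ℂ (LinearMap.ker ((A - mu • (1 : H →L[ℂ] H) : H →L[ℂ] H) : H →ₗ[ℂ] H)) := by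
  set S : Submodule ℂ H := LinearMap.ker ((A - mu • (1 : H →L[ℂ] H) : H →L[ℂ] H) : H →ₗ[ℂ] H) with hS
  have hSA : ∀ x : H, x ∈ S → A x = mu • x := by
    intro x hx
    have hx0 : (A - mu • (1 : H →L[ℂ] H)) x = 0 := hx
    simpa [sub_eq_zero, ContinuousLinearMap.sub_apply, ContinuousLinearMap.smul_apply,
      ContinuousLinearMap.one_apply] using hx0
  set D : Set H := (S : Set H) ∩ Metric.closedBall 0 1 with hD
  have hDcl : IsClosed D := by
    apply IsClosed.inter ?_ Metric.isClosed_closedBall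
    exact ContinuousLinearMap.isClosed_ker (A - mu • (1 : H →L[ℂ] H))
  have hK : IsCompact (closure (⇑A '' Metric.closedBall 0 ‖mu‖⁻¹)) :=
    IsCompactOperator.isCompact_closure_image_closedBall (𝕜₁ := ℂ)
      (f := (A : H →ₗ[ℂ] H)) hAc _
  have hsub : D ⊆ closure (⇑A '' Metric.closedBall 0 ‖mu‖⁻¹) := by
    rintro x ⟨hxS, hxB⟩
    apply subset_closure
    refine ⟨mu⁻¹ • x, ?_, ?_⟩
    · rw [Metric.mem_closedBall, dist_zero_right, norm_smul, norm_inv]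
      have hx1 : ‖x‖ ≤ 1 := by
        rwa [Metric.mem_closedBall, dist_zero_right] at hxB
      calc ‖mu‖⁻¹ * ‖x‖ ≤ ‖mu‖⁻¹ * 1 :=
        mul_le_mul_of_nonneg_left hx1 (by positivity)
        _ = ‖mu‖⁻¹ := mul_one _
    · rw [map_smul, hSA x hxS, smul_smul, inv_mul_cancel₀ hmu, one_smul]
  have hDcomp : IsCompact D := hK.of_isClosed_subset hDcl hsub
  have hball : IsCompact (Metric.closedBall (0 : S) 1) := by
    rw [Subtype.isCompact_iff]
    convert hDcomp using 1
    ext x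
    simp only [Set.mem_image, Metric.mem_closedBall, dist_zero_right, hD, Set.mem_inter_iff,
      SetLike.mem_coe]
    constructor
    · rintro ⟨y, hy, rfl⟩
      exact ⟨y.2, by simpa using hy⟩
    · rintro ⟨hxS, hx1⟩
      exact ⟨⟨x, hxS⟩, by simpa using hx1, rfl⟩
  exact FiniteDimensional.of_isCompact_closedBall₀ ℂ one_pos hball

end Aux

/-- A compact self-adjoint contraction which is a difference of two
orthogonal projections has symmetric eigenvalues away from `0, ±1`, with eigenspaces of
equal (finite) dimension. -/
theorem stmt_0 {H : Type*} [NormedAddCommGroup H] [InnerProductSpace ℂ H] [CompleteSpace H]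
    (A P Q : H →L[ℂ] H)
    (hAcompact : IsCompactOperator ⇑A)
    (hAsa : IsSelfAdjoint A)
    (hAnorm : ‖A‖ ≤ 1)
    (hPsa : IsSelfAdjoint P) (hPproj : P ∘L P = P)
    (hQsa : IsSelfAdjoint Q) (hQproj : Q ∘L Q = Q)
    (hA : A = P - Q)
    (lam : ℂ) (hlam : lam ∈ spectrum ℂ A)
    (h0 : lam ≠ 0) (h1 : lam ≠ 1) (hm1 : lam ≠ -1) :
    -lam ∈ spectrum ℂ A ∧
      FiniteDimensional ℂ (LinearMap.ker ((A - lam • (1 : H →L[ℂ] H) : H →L[ℂ] H) : H →ₗ[ℂ] H)) ∧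
      FiniteDimensional ℂ (LinearMap.ker ((A + lam • (1 : H →L[ℂ] H) : H →L[ℂ] H) : H →ₗ[ℂ] H)) ∧
      Module.finrank ℂ (LinearMap.ker ((A - lam • (1 : H →L[ℂ] H) : H →L[ℂ] H) : H →ₗ[ℂ] H)) =
        Module.finrank ℂ (LinearMap.ker ((A + lam • (1 : H →L[ℂ] H) : H →L[ℂ] H) : H →ₗ[ℂ] H)) := by
  have hrw : A + lam • (1 : H →L[ℂ] H) = A - (-lam) • (1 : H →L[ℂ] H) := by
    rw [neg_smul, sub_neg_eq_add]
  set B : H →L[ℂ] H := 1 - P - Q with hB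
  have hPP : P * P = P := hPproj
  have hQQ : Q * Q = Q := hQproj
  have e1 : A * B = Q * P - P * Q := by
    rw [hA, hB]
    simp only [mul_sub, sub_mul, mul_one, one_mul, hPP, hQQ]
    abel
  have e2 : B * A = P * Q - Q * P := by
    rw [hA, hB]
    simp only [mul_sub, sub_mul, mul_one, one_mul, hPP, hQQ]
    abel
  have e3 : B * B = 1 - A * A := by
    rw [hA, hB]
    simp only [mul_sub, sub_mul, mul_one, one_mul, hPP, hQQ]
    abel
  have hABx : ∀ x : H, A (B x) = -(B (A x)) := by
    intro x
    have h := congrArg (fun f : H →L[ℂ] H => f x) (e1.trans (by rw [e2]; abel : Q * P - P * Q = -(B * A)))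
    simpa [ContinuousLinearMap.mul_apply, ContinuousLinearMap.neg_apply] using h
  have hBBx : ∀ x : H, B (B x) = x - A (A x) := by
    intro x
    have h := congrArg (fun f : H →L[ℂ] H => f x) e3
    simpa [ContinuousLinearMap.mul_apply, ContinuousLinearMap.sub_apply,
      ContinuousLinearMap.one_apply] using h
  -- kernel membership characterizations
  have hmem1 : ∀ x : H, x ∈ LinearMap.ker ((A - lam • (1 : H →L[ℂ] H) : H →L[ℂ] H) : H →ₗ[ℂ] H) ↔ A x = lam • x := by
    intro x
    constructor
    · intro hx
      have hx0 : (A - lam • (1 : H →L[ℂ] H)) x = 0 := hx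
      simpa [sub_eq_zero, ContinuousLinearMap.sub_apply, ContinuousLinearMap.smul_apply,
        ContinuousLinearMap.one_apply] using hx0
    · intro hx
      show (A - lam • (1 : H →L[ℂ] H)) x = 0
      simp [ContinuousLinearMap.sub_apply, ContinuousLinearMap.smul_apply,
        ContinuousLinearMap.one_apply, hx]
  have hmem2 : ∀ x : H, x ∈ LinearMap.ker ((A + lam • (1 : H →L[ℂ] H) : H →L[ℂ] H) : H →ₗ[ℂ] H) ↔ A x = -(lam • x) := by
    intro x
    constructor
    · intro hx
      have hx0 : (A + lam • (1 : H →L[ℂ] H)) x = 0 := hx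
      have : A x + lam • x = 0 := by
        simpa [ContinuousLinearMap.add_apply, ContinuousLinearMap.smul_apply,
          ContinuousLinearMap.one_apply] using hx0
      exact eq_neg_of_add_eq_zero_left this
    · intro hx
      show (A + lam • (1 : H →L[ℂ] H)) x = 0
      simp [ContinuousLinearMap.add_apply, ContinuousLinearMap.smul_apply,
        ContinuousLinearMap.one_apply, hx]
  -- B maps eigenspaces to each other
  have hclos1 : ∀ x ∈ LinearMap.ker ((A - lam • (1 : H →L[ℂ] H) : H →L[ℂ] H) : H →ₗ[ℂ] H),
      B x ∈ LinearMap.ker ((A + lam • (1 : H →L[ℂ] H) : H →L[ℂ] H) : H →ₗ[ℂ] H) := by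
    intro x hx
    rw [hmem2]
    rw [hmem1] at hx
    rw [hABx, hx, map_smul]
  have hclos2 : ∀ x ∈ LinearMap.ker ((A + lam • (1 : H →L[ℂ] H) : H →L[ℂ] H) : H →ₗ[ℂ] H),
      B x ∈ LinearMap.ker ((A - lam • (1 : H →L[ℂ] H) : H →L[ℂ] H) : H →ₗ[ℂ] H) := by
    intro x hx
    rw [hmem1]
    rw [hmem2] at hx
    rw [hABx, hx, map_neg, map_smul, neg_neg]
  have hlamsq : (1 : ℂ) - lam * lam ≠ 0 := by
    intro hcontra
    have hfac : (lam - 1) * (lam + 1) = 0 := by linear_combination -hcontra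
    rcases mul_eq_zero.mp hfac with h | h
    · exact h1 (sub_eq_zero.mp h)
    · exact hm1 (eq_neg_of_add_eq_zero_left h)
  have hBB1 : ∀ x ∈ LinearMap.ker ((A - lam • (1 : H →L[ℂ] H) : H →L[ℂ] H) : H →ₗ[ℂ] H),
      B (B x) = ((1 : ℂ) - lam * lam) • x := by
    intro x hx
    rw [hmem1] at hx
    rw [hBBx, hx, map_smul, hx, smul_smul, sub_smul, one_smul]
  have hBB2 : ∀ x ∈ LinearMap.ker ((A + lam • (1 : H →L[ℂ] H) : H →L[ℂ] H) : H →ₗ[ℂ] H),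
      B (B x) = ((1 : ℂ) - lam * lam) • x := by
    intro x hx
    rw [hmem2] at hx
    rw [hBBx, hx, map_neg, map_smul, hx, smul_neg, neg_neg, smul_smul, sub_smul, one_smul]
  -- finite dimensionality
  haveI hfd1 : FiniteDimensional ℂ (LinearMap.ker ((A - lam • (1 : H →L[ℂ] H) : H →L[ℂ] H) : H →ₗ[ℂ] H)) :=
    aux_finiteDim_ker A hAcompact lam h0
  haveI hfd2 : FiniteDimensional ℂ (LinearMap.ker ((A + lam • (1 : H →L[ℂ] H) : H →L[ℂ] H) : H →ₗ[ℂ] H)) := by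
    rw [hrw]
    exact aux_finiteDim_ker A hAcompact (-lam) (neg_ne_zero.mpr h0)
  -- the two restricted maps
  set f : (LinearMap.ker ((A - lam • (1 : H →L[ℂ] H) : H →L[ℂ] H) : H →ₗ[ℂ] H)) →ₗ[ℂ]
      (LinearMap.ker ((A + lam • (1 : H →L[ℂ] H) : H →L[ℂ] H) : H →ₗ[ℂ] H)) :=
    LinearMap.restrict (B : H →ₗ[ℂ] H) hclos1 with hf
  set g : (LinearMap.ker ((A + lam • (1 : H →L[ℂ] H) : H →L[ℂ] H) : H →ₗ[ℂ] H)) →ₗ[ℂ]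
      (LinearMap.ker ((A - lam • (1 : H →L[ℂ] H) : H →L[ℂ] H) : H →ₗ[ℂ] H)) :=
    LinearMap.restrict (B : H →ₗ[ℂ] H) hclos2 with hg
  have hfinj : Function.Injective f := by
    rw [← LinearMap.ker_eq_bot, LinearMap.ker_eq_bot']
    intro x hx
    have hBx : B (x : H) = 0 := by
      have := congrArg (Subtype.val) hx
      exact this
    have hzero : ((1 : ℂ) - lam * lam) • (x : H) = 0 := by
      rw [← hBB1 x x.2, hBx, map_zero]
    have : (x : H) = 0 := by
      rcases smul_eq_zero.mp hzero with h | h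
      · exact absurd h hlamsq
      · exact h
    exact Subtype.ext this
  have hginj : Function.Injective g := by
    rw [← LinearMap.ker_eq_bot, LinearMap.ker_eq_bot']
    intro x hx
    have hBx : B (x : H) = 0 := by
      have := congrArg (Subtype.val) hx
      exact this
    have hzero : ((1 : ℂ) - lam * lam) • (x : H) = 0 := by
      rw [← hBB2 x x.2, hBx, map_zero]
    have : (x : H) = 0 := by
      rcases smul_eq_zero.mp hzero with h | h
      · exact absurd h hlamsq
      · exact h
    exact Subtype.ext this
  -- the spectrum claim
  obtain ⟨v, hv, hv0⟩ := (Submodule.ne_bot_iff _).mp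
    (aux_ker_ne_bot A hAcompact hAsa lam hlam h0)
  have hBv : B v ∈ LinearMap.ker ((A + lam • (1 : H →L[ℂ] H) : H →L[ℂ] H) : H →ₗ[ℂ] H) := hclos1 v hv
  have hBv0 : B v ≠ 0 := by
    intro hz
    apply hv0
    have hzero : ((1 : ℂ) - lam * lam) • v = 0 := by
      rw [← hBB1 v hv, hz, map_zero]
    rcases smul_eq_zero.mp hzero with h | h
    · exact absurd h hlamsq
    · exact h
  have hker2ne : LinearMap.ker ((A + lam • (1 : H →L[ℂ] H) : H →L[ℂ] H) : H →ₗ[ℂ] H) ≠ ⊥ := by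
    intro hbot
    exact hBv0 ((Submodule.eq_bot_iff _).mp hbot _ hBv)
  have hspec : -lam ∈ spectrum ℂ A := by
    apply aux_mem_spectrum_of_ker A (-lam)
    rwa [← hrw]
  refine ⟨hspec, hfd1, hfd2, le_antisymm ?_ ?_⟩
  · exact LinearMap.finrank_le_finrank_of_injective hfinj
  · exact LinearMap.finrank_le_finrank_of_injective hginj
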